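/- arXiv:2507.21355 — 5 statements merged into one kernel-verified Lean document; each statement's English description precedes it below -/
import Mathlib

section
/- With A and \bar{K} as above (A = R[y_1,...,y_{n+1}]/I_2(ψ), \bar{K} the image of I_2(ψ)+(x_n,y_n)), the ideal \bar{K} is generically a complete intersection: for every associated prime p of \bar{K}, the localization \bar{K}_p is the principal ideal generated by the image of x_n. -/
open MvPolynomial

set_option maxHeartbeats 1000000
set_option synthInstance.maxHeartbeats 1000000

noncomputable section

variable (k : Type*) [Field k] (n : ℕ)

/-- `R = k[x₁,...,xₙ]`. -/
abbrev RR := MvPolynomial (Fin n) k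

/-- `B = R[y₁,...,y_{n+1}]`. -/
abbrev BB := MvPolynomial (Fin (n + 1)) (RR k n)

/-- The element `xᵢ` of `B` (a coefficient variable). -/
def xB (i : Fin n) : BB k n := C (X i)

/-- The element `yᵢ` of `B`, for `i = 1, ..., n` (the first `n` of the `y`-variables). -/
def yB (i : Fin n) : BB k n := X i.castSucc

/-- The ideal `I₂(ψ)` of 2×2 minors of the matrix with rows `(x₁,...,xₙ)`, `(y₁,...,yₙ)`. -/
def I2ψ : Ideal (BB k n) :=
  Ideal.span (Set.range fun p : Fin n × Fin n => xB k n p.1 * yB k n p.2 - xB k n p.2 * yB k n p.1)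

/-- `h ∈ B` is bihomogeneous of bidegree `(a, b)`: as a polynomial in the `y`'s it is
homogeneous of degree `b`, and all its coefficients in `R` are homogeneous of degree `a`. -/
def BiHom (h : BB k n) (a b : ℕ) : Prop :=
  h.IsHomogeneous b ∧ ∀ m, (h.coeff m).IsHomogeneous a

/-- The maximal bigraded ideal of `B`, generated by all the variables. -/
def mB : Ideal (BB k n) :=
  Ideal.span (Set.range (xB k n) ∪ Set.range (X : Fin (n + 1) → BB k n))

/-- The ideal `m = (x₁,...,xₙ)` of `B`. -/
def mxB : Ideal (BB k n) := Ideal.span (Set.range (xB k n))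

/-- The height of an ideal. -/
noncomputable def idealHeight {S : Type*} [CommRing S] (I : Ideal S) : WithBot (WithTop ℕ) :=
  ⨅ (p : PrimeSpectrum S) (_ : I ≤ p.asIdeal), ringKrullDim (Localization.AtPrime p.asIdeal)

/-- The (bigraded) quotient `B/L` is Cohen–Macaulay of dimension `e`: its Krull dimension is
`e` and there is a regular sequence of length `e` on `B/L` consisting of elements of the
maximal bigraded ideal. -/
def QuotCM (L : Ideal (BB k n)) (e : ℕ) : Prop :=
  ringKrullDim (BB k n ⧸ L) = e ∧
    ∃ rs : List (BB k n), rs.length = e ∧ (∀ r ∈ rs, r ∈ mB k n) ∧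
      RingTheory.Sequence.IsRegular (BB k n ⧸ L) (rs.map (Ideal.Quotient.mk L))

/-- The quotient `A = B/I₂(ψ)`, isomorphic to `R(fm)[y_{n+1}]`. -/
abbrev AA := BB k n ⧸ I2ψ k n

/-- The quotient map `B → A`. -/
def πA : BB k n →+* AA k n := Ideal.Quotient.mk (I2ψ k n)

/-- The index of the last `x`-variable `xₙ` (as an element of `Fin n`, assuming `n ≥ 1`,
realized via `n-1 < n` when `n = m+1`; for `n = 0` this is junk). -/
def lastx (hn : 0 < n) : Fin n := ⟨n - 1, by omega⟩

/-! Auxiliary development -/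

abbrev TT := MvPolynomial (Fin n ⊕ Fin 3) k
def ZU : TT k n := X (Sum.inr 0)
def ZV : TT k n := X (Sum.inr 1)
def ZW : TT k n := X (Sum.inr 2)
def ZZ (i : Fin n) : TT k n := X (Sum.inl i)

def φT : BB k n →+* TT k n :=
  eval₂Hom (eval₂Hom MvPolynomial.C (fun i => ZU k n * ZZ k n i))
    (fun j : Fin (n + 1) => if h : (j : ℕ) < n then ZV k n * ZZ k n ⟨j, h⟩ else ZW k n)

lemma φT_x (i : Fin n) : φT k n (xB k n i) = ZU k n * ZZ k n i := by
  simp [φT, xB]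

lemma φT_y (i : Fin n) : φT k n (yB k n i) = ZV k n * ZZ k n i := by
  simp only [φT, yB, eval₂Hom_X']
  rw [dif_pos (show ((i.castSucc : Fin (n + 1)) : ℕ) < n by simp)]
  congr 1

lemma φT_last : φT k n (X (Fin.last n)) = ZW k n := by
  simp only [φT, eval₂Hom_X']
  rw [dif_neg (by simp [Fin.last])]

def MmX (E : Multiset (Fin n)) : BB k n := (E.map (xB k n)).prod
def MmY (F : Multiset (Fin n)) : BB k n := (F.map (yB k n)).prod
def Mm (E F : Multiset (Fin n)) (c : ℕ) : BB k n :=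
  MmX k n E * MmY k n F * X (Fin.last n) ^ c

lemma Mm_cons_left (i : Fin n) (E F : Multiset (Fin n)) (c : ℕ) :
    Mm k n (i ::ₘ E) F c = xB k n i * Mm k n E F c := by
  simp only [Mm, MmX, Multiset.map_cons, Multiset.prod_cons]; ring

lemma Mm_cons_right (j : Fin n) (E F : Multiset (Fin n)) (c : ℕ) :
    Mm k n E (j ::ₘ F) c = yB k n j * Mm k n E F c := by
  simp only [Mm, MmY, Multiset.map_cons, Multiset.prod_cons]; ring

lemma gen_mem (i j : Fin n) :
    xB k n i * yB k n j - xB k n j * yB k n i ∈ I2ψ k n :=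
  Ideal.subset_span ⟨(i, j), rfl⟩

lemma swap_mem (i j : Fin n) (E F : Multiset (Fin n)) (c : ℕ) :
    Mm k n (i ::ₘ E) (j ::ₘ F) c - Mm k n (j ::ₘ E) (i ::ₘ F) c ∈ I2ψ k n := by
  have h : Mm k n (i ::ₘ E) (j ::ₘ F) c - Mm k n (j ::ₘ E) (i ::ₘ F) c
      = (xB k n i * yB k n j - xB k n j * yB k n i) * Mm k n E F c := by
    rw [Mm_cons_left, Mm_cons_left, Mm_cons_right, Mm_cons_right]; ring
  rw [h]
  exact Ideal.mul_mem_right _ _ (gen_mem k n i j)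

lemma Mm_congr (N : ℕ) : ∀ (E F E' F' : Multiset (Fin n)) (c : ℕ),
    Multiset.card E = N → E + F = E' + F' → Multiset.card E = Multiset.card E' →
    Mm k n E F c - Mm k n E' F' c ∈ I2ψ k n := by
  induction N with
  | zero =>
    intro E F E' F' c h0 hsum hcard
    have hE : E = 0 := Multiset.card_eq_zero.mp h0
    have hE' : E' = 0 := Multiset.card_eq_zero.mp (hcard ▸ h0)
    subst hE; subst hE'
    simp only [zero_add] at hsum
    subst hsum
    simp
  | succ N ih =>
    intro E F E' F' c h0 hsum hcard
    have hEne : E ≠ 0 := by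
      intro h; rw [h] at h0; simp at h0
    obtain ⟨i, hi⟩ := Multiset.exists_mem_of_ne_zero hEne
    obtain ⟨E₀, rfl⟩ := Multiset.exists_cons_of_mem hi
    have hiEF : i ∈ E' + F' := by
      rw [← hsum]; exact Multiset.mem_add.mpr (Or.inl (Multiset.mem_cons_self _ _))
    rcases Multiset.mem_add.mp hiEF with hi' | hi'
    · obtain ⟨E₀', rfl⟩ := Multiset.exists_cons_of_mem hi'
      have hsum0 : E₀ + F = E₀' + F' := by
        have h2 : i ::ₘ (E₀ + F) = i ::ₘ (E₀' + F') := by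
          simpa [Multiset.cons_add] using hsum
        exact (Multiset.cons_inj_right i).mp h2
      have hcard0 : Multiset.card E₀ = N := by simpa using h0
      have hcard1 : Multiset.card E₀ = Multiset.card E₀' := by simpa using hcard
      have d0 := ih E₀ F E₀' F' c hcard0 hsum0 hcard1
      have heq : Mm k n (i ::ₘ E₀) F c - Mm k n (i ::ₘ E₀') F' c
          = xB k n i * (Mm k n E₀ F c - Mm k n E₀' F' c) := by
        rw [Mm_cons_left, Mm_cons_left]; ring
      rw [heq]
      exact Ideal.mul_mem_left _ _ d0
    · obtain ⟨F₀', rfl⟩ := Multiset.exists_cons_of_mem hi'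
      have hE'ne : E' ≠ 0 := by
        intro h
        rw [h, Multiset.card_zero, Multiset.card_cons] at hcard
        omega
      obtain ⟨j, hj⟩ := Multiset.exists_mem_of_ne_zero hE'ne
      obtain ⟨E₀', rfl⟩ := Multiset.exists_cons_of_mem hj
      have hswap : Mm k n (j ::ₘ E₀') (i ::ₘ F₀') c - Mm k n (i ::ₘ E₀') (j ::ₘ F₀') c
          ∈ I2ψ k n := swap_mem k n j i E₀' F₀' c
      have hsum0 : E₀ + F = E₀' + (j ::ₘ F₀') := by
        have h2 : i ::ₘ (E₀ + F) = i ::ₘ (E₀' + (j ::ₘ F₀')) := by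
          rw [← Multiset.cons_add, hsum]
          simp only [← Multiset.singleton_add]
          abel
        exact (Multiset.cons_inj_right i).mp h2
      have hcard0 : Multiset.card E₀ = N := by simpa using h0
      have hcard1 : Multiset.card E₀ = Multiset.card E₀' := by
        simp only [Multiset.card_cons] at hcard h0 ⊢; omega
      have d0 := ih E₀ F E₀' (j ::ₘ F₀') c hcard0 hsum0 hcard1
      have heq : Mm k n (i ::ₘ E₀) F c - Mm k n (j ::ₘ E₀') (i ::ₘ F₀') c
          = xB k n i * (Mm k n E₀ F c - Mm k n E₀' (j ::ₘ F₀') c)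
            - (Mm k n (j ::ₘ E₀') (i ::ₘ F₀') c - Mm k n (i ::ₘ E₀') (j ::ₘ F₀') c) := by
        simp only [Mm_cons_left, Mm_cons_right]; ring
      rw [heq]
      exact sub_mem (Ideal.mul_mem_left _ _ d0) hswap

lemma φ_MmX (E : Multiset (Fin n)) :
    φT k n (MmX k n E) = ZU k n ^ Multiset.card E * (E.map (ZZ k n)).prod := by
  induction E using Multiset.induction_on with
  | empty => simp [MmX]
  | cons a E ih =>
    simp only [MmX, Multiset.map_cons, Multiset.prod_cons, map_mul, Multiset.card_cons] at *
    rw [φT_x, ih, pow_succ]; ring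

lemma φ_MmY (F : Multiset (Fin n)) :
    φT k n (MmY k n F) = ZV k n ^ Multiset.card F * (F.map (ZZ k n)).prod := by
  induction F using Multiset.induction_on with
  | empty => simp [MmY]
  | cons a F ih =>
    simp only [MmY, Multiset.map_cons, Multiset.prod_cons, map_mul, Multiset.card_cons] at *
    rw [φT_y, ih, pow_succ]; ring

lemma monomial_toFinsupp (S : Multiset (Fin n)) :
    (monomial (Finsupp.mapDomain Sum.inl S.toFinsupp) (1 : k) : TT k n)
      = (S.map (ZZ k n)).prod := by
  induction S using Multiset.induction_on with
  | empty =>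
    simp only [Multiset.toFinsupp_zero, Finsupp.mapDomain_zero, Multiset.map_zero,
      Multiset.prod_zero]
    rw [monomial_zero', map_one]
  | cons a S ih =>
    rw [show a ::ₘ S = {a} + S from (Multiset.singleton_add a S).symm,
      Multiset.toFinsupp_add, Finsupp.mapDomain_add, Multiset.toFinsupp_singleton,
      Finsupp.mapDomain_single, ← one_mul (1 : k), ← monomial_mul, ih,
      Multiset.map_add, Multiset.prod_add, Multiset.map_singleton, Multiset.prod_singleton]
    congr 1

def DD (E F : Multiset (Fin n)) (c : ℕ) : (Fin n ⊕ Fin 3) →₀ ℕ :=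
  Finsupp.single (Sum.inr 0) (Multiset.card E) + Finsupp.single (Sum.inr 1) (Multiset.card F)
    + Finsupp.mapDomain Sum.inl (E + F).toFinsupp + Finsupp.single (Sum.inr 2) c

lemma φ_Mm (E F : Multiset (Fin n)) (c : ℕ) :
    φT k n (Mm k n E F c) = monomial (DD n E F c) 1 := by
  unfold Mm
  rw [map_mul, map_mul, map_pow, φT_last, φ_MmX, φ_MmY]
  have h1 : ZU k n ^ Multiset.card E * (E.map (ZZ k n)).prod
      * (ZV k n ^ Multiset.card F * (F.map (ZZ k n)).prod) * ZW k n ^ c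
      = ZU k n ^ Multiset.card E * ZV k n ^ Multiset.card F
        * ((E + F).map (ZZ k n)).prod * ZW k n ^ c := by
    rw [Multiset.map_add, Multiset.prod_add]; ring
  rw [h1, ZU, ZV, ZW, X_pow_eq_monomial, X_pow_eq_monomial, X_pow_eq_monomial,
    ← monomial_toFinsupp, monomial_mul, monomial_mul, monomial_mul]
  simp only [one_mul, mul_one]
  congr 1

def αD (d : (Fin n ⊕ Fin 3) →₀ ℕ) : Multiset (Fin n) :=
  Finsupp.toMultiset (Finsupp.equivFunOnFinite.symm fun i => d (Sum.inl i))

def gD (d : (Fin n ⊕ Fin 3) →₀ ℕ) : BB k n :=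
  if d (Sum.inr 0) + d (Sum.inr 1) = Multiset.card (αD n d) then
    Mm k n (↑(((αD n d).sort (· ≤ ·)).take (d (Sum.inr 0))))
      (↑(((αD n d).sort (· ≤ ·)).drop (d (Sum.inr 0)))) (d (Sum.inr 2))
  else 0

lemma αD_count (d : (Fin n ⊕ Fin 3) →₀ ℕ) (i : Fin n) :
    Multiset.count i (αD n d) = d (Sum.inl i) := by
  rw [αD, Finsupp.count_toMultiset]
  simp

lemma αD_DD (E F : Multiset (Fin n)) (c : ℕ) : αD n (DD n E F c) = E + F := by
  have h : (Finsupp.equivFunOnFinite.symm fun i => DD n E F c (Sum.inl i))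
      = (E + F).toFinsupp := by
    ext i
    simp [DD, Finsupp.single_apply, Finsupp.mapDomain_apply Sum.inl_injective]
  rw [αD, h, Multiset.toFinsupp_toMultiset]

lemma mapDomain_inl_inr (t : Fin n →₀ ℕ) (b : Fin 3) :
    Finsupp.mapDomain Sum.inl t (Sum.inr b) = 0 :=
  Finsupp.mapDomain_notin_range _ _ (by simp)

lemma DD_inr (E F : Multiset (Fin n)) (c : ℕ) (t : Fin 3) :
    DD n E F c (Sum.inr t)
      = if t = 0 then Multiset.card E else if t = 1 then Multiset.card F else c := by
  fin_cases t <;>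
    simp [DD, mapDomain_inl_inr, Multiset.toFinsupp_add, Finsupp.single_apply]

lemma gD_DD (E F : Multiset (Fin n)) (c : ℕ) :
    Mm k n E F c - gD k n (DD n E F c) ∈ I2ψ k n := by
  have h0 : DD n E F c (Sum.inr 0) = Multiset.card E := by simp [DD_inr]
  have h1 : DD n E F c (Sum.inr 1) = Multiset.card F := by simp [DD_inr]
  have h2 : DD n E F c (Sum.inr 2) = c := by simp [DD_inr]
  rw [gD, αD_DD, h0, h1, h2, if_pos (by simp)]
  set l := (E + F).sort (· ≤ ·) with hl
  have hlen : l.length = Multiset.card E + Multiset.card F := by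
    rw [hl, Multiset.length_sort]; simp
  have hsum : E + F = ↑(l.take (Multiset.card E)) + ↑(l.drop (Multiset.card E)) := by
    rw [Multiset.coe_add, List.take_append_drop, hl, Multiset.sort_eq]
  have hcard : Multiset.card E
      = Multiset.card (↑(l.take (Multiset.card E)) : Multiset (Fin n)) := by
    rw [Multiset.coe_card, List.length_take, hlen]
    omega
  exact Mm_congr k n (Multiset.card E) E F _ _ c rfl hsum hcard

def LL (mi : Fin n) : Ideal (BB k n) :=
  I2ψ k n ⊔ Ideal.span {xB k n mi, yB k n mi}

lemma MmX_mem (mi : Fin n) (E : Multiset (Fin n)) (F : Multiset (Fin n)) (c : ℕ)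
    (h : mi ∈ E) : Mm k n E F c ∈ Ideal.span {xB k n mi, yB k n mi} := by
  obtain ⟨E₁, rfl⟩ := Multiset.exists_cons_of_mem h
  rw [Mm_cons_left]
  exact Ideal.mul_mem_right _ _ (Ideal.subset_span (Set.mem_insert _ _))

lemma MmY_mem (mi : Fin n) (E : Multiset (Fin n)) (F : Multiset (Fin n)) (c : ℕ)
    (h : mi ∈ F) : Mm k n E F c ∈ Ideal.span {xB k n mi, yB k n mi} := by
  obtain ⟨F₁, rfl⟩ := Multiset.exists_cons_of_mem h
  rw [Mm_cons_right]
  exact Ideal.mul_mem_right _ _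
    (Ideal.subset_span (Set.mem_insert_of_mem _ (Set.mem_singleton _)))

lemma gD_mem (mi : Fin n) (d : (Fin n ⊕ Fin 3) →₀ ℕ) (hd : d (Sum.inl mi) ≠ 0) :
    gD k n d ∈ LL k n mi := by
  rw [gD]
  split_ifs with h
  · have hmem : mi ∈ αD n d := by
      rw [← Multiset.count_pos, αD_count]
      omega
    have hmem' : mi ∈ ((αD n d).sort (· ≤ ·)) := (Multiset.mem_sort _).mpr hmem
    rw [← List.take_append_drop (d (Sum.inr 0)) ((αD n d).sort (· ≤ ·)),
      List.mem_append] at hmem'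
    rcases hmem' with h' | h'
    · exact Submodule.mem_sup_right (MmX_mem k n mi _ _ _ (Multiset.mem_coe.mpr h'))
    · exact Submodule.mem_sup_right (MmY_mem k n mi _ _ _ (Multiset.mem_coe.mpr h'))
  · exact Submodule.zero_mem _

def sT (t : TT k n) : BB k n := ∑ d ∈ t.support, MvPolynomial.coeff d t • gD k n d

lemma sT_eq_on (t : TT k n) (S : Finset ((Fin n ⊕ Fin 3) →₀ ℕ)) (h : t.support ⊆ S) :
    sT k n t = ∑ d ∈ S, MvPolynomial.coeff d t • gD k n d :=
  (Finset.sum_subset h (by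
    intro d _ hd
    rw [MvPolynomial.notMem_support_iff.mp hd, zero_smul]))

lemma sT_add (t₁ t₂ : TT k n) : sT k n (t₁ + t₂) = sT k n t₁ + sT k n t₂ := by
  rw [sT_eq_on k n (t₁ + t₂) (t₁.support ∪ t₂.support)
      (fun x hx => MvPolynomial.support_add hx),
    sT_eq_on k n t₁ (t₁.support ∪ t₂.support) Finset.subset_union_left,
    sT_eq_on k n t₂ (t₁.support ∪ t₂.support) Finset.subset_union_right,
    ← Finset.sum_add_distrib]
  refine Finset.sum_congr rfl fun d _ => ?_
  rw [MvPolynomial.coeff_add, add_smul]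

lemma sT_monomial (D : (Fin n ⊕ Fin 3) →₀ ℕ) (c : k) :
    sT k n (monomial D c) = c • gD k n D := by
  classical
  rcases eq_or_ne c 0 with rfl | hc
  · rw [map_zero]
    simp [sT]
  · rw [sT, support_monomial, if_neg hc, Finset.sum_singleton, coeff_monomial, if_pos rfl]

lemma smul_mem_ideal {I : Ideal (BB k n)} (c : k) {b : BB k n} (h : b ∈ I) : c • b ∈ I := by
  rw [Algebra.smul_def]
  exact Ideal.mul_mem_left _ _ h

lemma algebraMap_BB (c : k) : algebraMap k (BB k n) c = C (C c) := rfl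

lemma atomic_eq (u : Fin (n + 1) →₀ ℕ) (e : Fin n →₀ ℕ) (c : k) :
    (monomial u (monomial e c) : BB k n)
      = c • Mm k n (Finsupp.toMultiset e)
          (Finsupp.toMultiset (Finsupp.equivFunOnFinite.symm fun i : Fin n => u i.castSucc))
          (u (Fin.last n)) := by
  have hx : MmX k n (Finsupp.toMultiset e)
      = C (e.prod fun i m => (X i : RR k n) ^ m) := by
    rw [MmX, Finsupp.toMultiset_map, Finsupp.prod_toMultiset,
      Finsupp.prod_mapDomain_index (fun _ => pow_zero _) (fun _ m₁ m₂ => pow_add _ m₁ m₂)]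
    rw [map_finsuppProd]
    exact Finsupp.prod_congr fun i _ => by rw [map_pow]; rfl
  have hy : MmY k n (Finsupp.toMultiset
        (Finsupp.equivFunOnFinite.symm fun i : Fin n => u i.castSucc))
      = ∏ i : Fin n, (X i.castSucc : BB k n) ^ u i.castSucc := by
    rw [MmY, Finsupp.toMultiset_map, Finsupp.prod_toMultiset,
      Finsupp.prod_mapDomain_index (fun _ => pow_zero _) (fun _ m₁ m₂ => pow_add _ m₁ m₂)]
    rw [Finsupp.prod_fintype _ _ (fun _ => pow_zero _)]
    exact Finset.prod_congr rfl fun i _ => by simp [yB]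
  have hu : (u.prod fun j m => (X j : BB k n) ^ m)
      = (∏ i : Fin n, (X i.castSucc : BB k n) ^ u i.castSucc)
        * X (Fin.last n) ^ u (Fin.last n) := by
    rw [Finsupp.prod_fintype _ _ (fun _ => pow_zero _), Fin.prod_univ_castSucc]
  rw [monomial_eq, monomial_eq, Mm, hx, hy, Algebra.smul_def, algebraMap_BB, hu, map_mul]
  ring

lemma φT_C_C (c : k) : φT k n (C (C c)) = C c := by
  simp [φT]

lemma key_cong_atomic (u : Fin (n + 1) →₀ ℕ) (e : Fin n →₀ ℕ) (c : k) :
    (monomial u (monomial e c) : BB k n)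
      - sT k n (φT k n (monomial u (monomial e c))) ∈ I2ψ k n := by
  rw [atomic_eq]
  set E := Finsupp.toMultiset e
  set F := Finsupp.toMultiset (Finsupp.equivFunOnFinite.symm fun i : Fin n => u i.castSucc)
  set c' := u (Fin.last n)
  have hφ : φT k n (c • Mm k n E F c') = monomial (DD n E F c') c := by
    rw [Algebra.smul_def, algebraMap_BB, map_mul, φT_C_C, φ_Mm, C_mul_monomial, mul_one]
  rw [hφ, sT_monomial, ← smul_sub]
  exact smul_mem_ideal k n c (gD_DD k n E F c')

theorem key_cong (z : BB k n) : z - sT k n (φT k n z) ∈ I2ψ k n := by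
  induction z using MvPolynomial.induction_on' with
  | add p q hp hq =>
    rw [map_add, sT_add]
    have := add_mem hp hq
    have heq : p + q - (sT k n (φT k n p) + sT k n (φT k n q))
        = p - sT k n (φT k n p) + (q - sT k n (φT k n q)) := by ring
    rw [heq]
    exact this
  | monomial u a =>
    induction a using MvPolynomial.induction_on' with
    | add p q hp hq =>
      rw [map_add, map_add, sT_add]
      have := add_mem hp hq
      have heq : monomial u p + monomial u q
            - (sT k n (φT k n (monomial u p)) + sT k n (φT k n (monomial u q)))
          = monomial u p - sT k n (φT k n (monomial u p))
            + (monomial u q - sT k n (φT k n (monomial u q))) := by ring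
      rw [heq]
      exact this
    | monomial e c => exact key_cong_atomic k n u e c

lemma supp_of_X_mul (s : Fin n ⊕ Fin 3) (q : TT k n) (d : (Fin n ⊕ Fin 3) →₀ ℕ)
    (hd : d ∈ (X s * q).support) : d s ≠ 0 := by
  classical
  intro h0
  have hcf := MvPolynomial.mem_support_iff.mp hd
  rw [coeff_X_mul'] at hcf
  rw [if_neg (by simp [Finsupp.mem_support_iff, h0])] at hcf
  exact hcf rfl

theorem key_reg (hn : 2 ≤ n) (w : BB k n)
    (hw : xB k n ⟨0, Nat.lt_of_lt_of_le two_pos hn⟩ * w ∈ LL k n (lastx n (Nat.lt_of_lt_of_le two_pos hn))) :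
    w ∈ LL k n (lastx n (Nat.lt_of_lt_of_le two_pos hn)) := by
  classical
  set mi : Fin n := lastx n (Nat.lt_of_lt_of_le two_pos hn) with hmi
  set i0 : Fin n := ⟨0, Nat.lt_of_lt_of_le two_pos hn⟩ with hi0
  have hne : Sum.inl (α := Fin n) (β := Fin 3) i0 ≠ Sum.inl mi := by
    simp only [ne_eq, Sum.inl.injEq]
    intro h
    have : (i0 : ℕ) = (mi : ℕ) := by rw [h]
    simp [hi0, hmi, lastx] at this
    omega
  -- map of LL into (Z mi)
  have hmap : Ideal.map (φT k n) (LL k n mi) ≤ Ideal.span {ZZ k n mi} := by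
    rw [LL, Ideal.map_sup]
    apply sup_le
    · rw [I2ψ, Ideal.map_span]
      rw [Ideal.span_le]
      rintro _ ⟨_, ⟨p, rfl⟩, rfl⟩
      have : φT k n (xB k n p.1 * yB k n p.2 - xB k n p.2 * yB k n p.1) = 0 := by
        rw [map_sub, map_mul, map_mul, φT_x, φT_x, φT_y, φT_y]; ring
      rw [this]
      exact Submodule.zero_mem _
    · rw [Ideal.map_span]
      rw [Ideal.span_le]
      rintro _ ⟨b, hb, rfl⟩
      rcases hb with rfl | hb
      · rw [φT_x]
        exact Ideal.mem_span_singleton.mpr ⟨ZU k n, mul_comm _ _⟩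
      · rcases hb with rfl
        rw [φT_y]
        exact Ideal.mem_span_singleton.mpr ⟨ZV k n, mul_comm _ _⟩
  have hφw : φT k n (xB k n i0 * w) ∈ Ideal.span {ZZ k n mi} :=
    hmap (Ideal.mem_map_of_mem _ hw)
  obtain ⟨q, hq⟩ := Ideal.mem_span_singleton.mp hφw
  have supp1 : ∀ d ∈ (φT k n (xB k n i0 * w)).support, d (Sum.inl mi) ≠ 0 := by
    intro d hd
    rw [hq] at hd
    exact supp_of_X_mul k n _ q d hd
  -- rewrite φT (x0 * w)
  set D₀ : (Fin n ⊕ Fin 3) →₀ ℕ :=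
    Finsupp.single (Sum.inr 0) 1 + Finsupp.single (Sum.inl i0) 1 with hD₀
  have hx0 : φT k n (xB k n i0) = monomial D₀ 1 := by
    rw [φT_x, ZU, ZZ, ← pow_one (X (R := k) (Sum.inr (0 : Fin 3))), X_pow_eq_monomial,
      ← pow_one (X (R := k) (Sum.inl i0)), X_pow_eq_monomial, monomial_mul, one_mul]
  have suppw : ∀ d ∈ (φT k n w).support, d (Sum.inl mi) ≠ 0 := by
    intro d hd
    have hcf : MvPolynomial.coeff d (φT k n w) ≠ 0 := MvPolynomial.mem_support_iff.mp hd
    have hcf2 : MvPolynomial.coeff (d + D₀) (φT k n (xB k n i0 * w)) ≠ 0 := by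
      rw [map_mul, hx0, mul_comm, coeff_mul_monomial, mul_one]
      exact hcf
    have := supp1 (d + D₀) (MvPolynomial.mem_support_iff.mpr hcf2)
    rw [Finsupp.add_apply, hD₀, Finsupp.add_apply, Finsupp.single_apply,
      Finsupp.single_apply, if_neg (by simp), if_neg hne] at this
    simpa using this
  have hsT : sT k n (φT k n w) ∈ LL k n mi := by
    rw [sT]
    exact Submodule.sum_mem _ fun d hd =>
      smul_mem_ideal k n _ (gD_mem k n mi d (suppw d hd))
  have hw2 : w = w - sT k n (φT k n w) + sT k n (φT k n w) := by ring
  rw [hw2]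
  exact add_mem (Submodule.mem_sup_left (key_cong k n w)) hsT

theorem main_CI (hn : 2 ≤ n) (h : 0 < n) (p : Ideal (AA k n)) [hpr : p.IsPrime]
    (hp : p ∈ associatedPrimes (AA k n)
      (AA k n ⧸ Ideal.map (πA k n)
        (Ideal.span {xB k n (lastx n h), yB k n (lastx n h)}))) :
    Ideal.map (@algebraMap (AA k n) (@Localization.AtPrime (AA k n) (Ideal.Quotient.commSemiring _) p _) (Ideal.Quotient.commSemiring _) _ _)
        (Ideal.map (πA k n)
          (Ideal.span {xB k n (lastx n h), yB k n (lastx n h)})) =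
      Ideal.map (@algebraMap (AA k n) (@Localization.AtPrime (AA k n) (Ideal.Quotient.commSemiring _) p _) (Ideal.Quotient.commSemiring _) _ _)
        (Ideal.span {πA k n (xB k n (lastx n h))}) := by
  classical
  set mi : Fin n := lastx n h with hmi
  have hi0 : (0 : ℕ) < n := h
  set i0 : Fin n := ⟨0, hi0⟩ with hi0d
  set Kb := Ideal.map (πA k n) (Ideal.span {xB k n mi, yB k n mi}) with hKbdef
  haveI : Kb.IsTwoSided := ⟨fun {a} b ha => (congrArg (· ∈ Kb) (mul_comm (b : AA k n) a)).mp (Kb.mul_mem_left b ha)⟩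
  obtain ⟨hpr', z, hz⟩ := (isAssociatedPrime_iff).mp hp
  have hsurj : Function.Surjective (πA k n) := Ideal.Quotient.mk_surjective
  -- the image of x_{i0} is not in p
  have hx0p : πA k n (xB k n i0) ∉ p := by
    intro hmem
    obtain ⟨z₁, rfl⟩ := Ideal.Quotient.mk_surjective z
    obtain ⟨w, rfl⟩ := hsurj z₁
    rw [hz] at hmem
    have hann := (Submodule.mem_bot _).mp (Submodule.mem_colon_singleton.mp hmem)
    have hsm : πA k n (xB k n i0) • (Ideal.Quotient.mk Kb (πA k n w))
        = Ideal.Quotient.mk Kb (πA k n (xB k n i0) * πA k n w) := rfl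
    rw [hsm] at hann
    have hmemKb : πA k n (xB k n i0 * w) ∈ Kb := by
      rw [map_mul]
      exact Ideal.Quotient.eq_zero_iff_mem.mp hann
    obtain ⟨v, hv, hveq⟩ :=
      (Ideal.mem_map_iff_of_surjective _ hsurj).mp hmemKb
    have hdiff : v - xB k n i0 * w ∈ I2ψ k n :=
      (Ideal.Quotient.mk_eq_mk_iff_sub_mem v (xB k n i0 * w)).mp hveq
    have hLL : xB k n i0 * w ∈ LL k n mi := by
      have heq : xB k n i0 * w = -(v - xB k n i0 * w) + v := by ring
      rw [heq]
      exact add_mem (Submodule.mem_sup_left (neg_mem hdiff)) (Submodule.mem_sup_right hv)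
    have hwLL : w ∈ LL k n mi := key_reg k n hn w hLL
    obtain ⟨aI, haI, bS, hbS, hab⟩ := Submodule.mem_sup.mp hwLL
    have haI0 : πA k n aI = 0 := Ideal.Quotient.eq_zero_iff_mem.mpr haI
    have hπw : πA k n w = πA k n bS := by
      rw [← hab, map_add, haI0, zero_add]
    have hπwKb : πA k n w ∈ Kb := hπw ▸ Ideal.mem_map_of_mem _ hbS
    have hz0 : Ideal.Quotient.mk Kb (πA k n w) = 0 :=
      Ideal.Quotient.eq_zero_iff_mem.mpr hπwKb
    rw [hz0] at hz
    exact hpr'.ne_top (eq_top_iff.mpr fun r _ => by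
      rw [hz, Submodule.mem_colon_singleton, smul_zero]; exact Submodule.zero_mem _)
  -- the determinantal relation
  have hrel : πA k n (xB k n i0) * πA k n (yB k n mi)
      = πA k n (xB k n mi) * πA k n (yB k n i0) := by
    rw [← map_mul, ← map_mul]
    exact (Ideal.Quotient.mk_eq_mk_iff_sub_mem _ _).mpr (gen_mem k n i0 mi)
  -- localization
  set f := @algebraMap (AA k n) (@Localization.AtPrime (AA k n) (Ideal.Quotient.commSemiring _) p _) (Ideal.Quotient.commSemiring _) _ _ with hf
  have hunit : IsUnit (f (πA k n (xB k n i0))) :=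
    IsLocalization.map_units (M := p.primeCompl) (@Localization.AtPrime (AA k n) (Ideal.Quotient.commSemiring _) p _)
      ⟨πA k n (xB k n i0), hx0p⟩
  have hKb : Ideal.map (πA k n) (Ideal.span {xB k n mi, yB k n mi})
      = Ideal.span {πA k n (xB k n mi), πA k n (yB k n mi)} := by
    rw [Ideal.map_span, Set.image_insert_eq, Set.image_singleton]
  rw [hKbdef, hKb, Ideal.map_span, Ideal.map_span, Set.image_insert_eq, Set.image_singleton,
    Set.image_singleton]
  apply le_antisymm
  · rw [Ideal.span_le]
    rintro t (rfl | ht)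
    · exact Ideal.subset_span rfl
    · rcases ht with rfl
      refine Ideal.mem_span_singleton.mpr ⟨↑hunit.unit⁻¹ * f (πA k n (yB k n i0)), ?_⟩
      have h1 : (↑hunit.unit : @Localization.AtPrime (AA k n) (Ideal.Quotient.commSemiring _) p _) = f (πA k n (xB k n i0)) :=
        hunit.unit_spec
      have hrelf : f (πA k n (xB k n i0)) * f (πA k n (yB k n mi))
          = f (πA k n (xB k n mi)) * f (πA k n (yB k n i0)) := by
        rw [← map_mul f, hrel, map_mul f]
      calc f (πA k n (yB k n mi))
          = ↑hunit.unit⁻¹ * (f (πA k n (xB k n i0)) * f (πA k n (yB k n mi))) := by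
            rw [← mul_assoc,
              show (↑hunit.unit⁻¹ * f (πA k n (xB k n i0)) : @Localization.AtPrime (AA k n) (Ideal.Quotient.commSemiring _) p _) = 1 from
                IsUnit.val_inv_mul hunit, one_mul]
        _ = ↑hunit.unit⁻¹ * (f (πA k n (xB k n mi)) * f (πA k n (yB k n i0))) := by
            rw [hrelf]
        _ = f (πA k n (xB k n mi)) * (↑hunit.unit⁻¹ * f (πA k n (yB k n i0))) := by
            ring
  · exact Ideal.span_mono (Set.singleton_subset_iff.mpr (Set.mem_insert _ _))


/-- `K̄` is generically a complete intersection: at every associated prime `p`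
of `A/K̄`, the localization of `K̄` is the principal ideal generated by the image of `xₙ`. -/
theorem Kbar_generically_CI
    [IsAlgClosed k] (hn : 2 ≤ n)
    (p : Ideal (AA k n))
    (hp : p ∈ associatedPrimes (AA k n)
      (AA k n ⧸ Ideal.map (πA k n)
        (Ideal.span {xB k n (lastx n (by omega)), yB k n (lastx n (by omega))}))) :
    haveI : p.IsPrime := hp.1
    Ideal.map (@algebraMap (AA k n) (@Localization.AtPrime (AA k n) (Ideal.Quotient.commSemiring _) p _) (Ideal.Quotient.commSemiring _) _ _)
        (Ideal.map (πA k n)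
          (Ideal.span {xB k n (lastx n (by omega)), yB k n (lastx n (by omega))})) =
      Ideal.map (@algebraMap (AA k n) (@Localization.AtPrime (AA k n) (Ideal.Quotient.commSemiring _) p _) (Ideal.Quotient.commSemiring _) _ _)
        (Ideal.span {πA k n (xB k n (lastx n (by omega)))}) := by
  exact @main_CI k _ n hn (by omega) p hp.1 hp

end
end

section
/- Let h_1,...,h_d be a downgraded sequence starting from h_1 = h (a bihomogeneous polynomial of bidegree (d−1,1) with h ∉ I_2(ψ)), where h_{i+1} = [y_1 ... y_n]·∂h_i for some column ∂h_i with [x_1 ... x_n]·∂h_i = h_i. Then h_i ≠ 0 for all 1 ≤ i ≤ d, and h_i is bihomogeneous of bidegree (d−i, i). -/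
open MvPolynomial

set_option maxHeartbeats 1000000
set_option synthInstance.maxHeartbeats 1000000

noncomputable section

variable (k : Type*) [Field k] (n : ℕ)

/-- `q` is a downgrade of `p`: there is a column `c` of bihomogeneous entries, all of the
same bidegree, with `[x₁ … xₙ]·c = p` and `[y₁ … yₙ]·c = q`. -/
def IsDowngrade (p q : BB k n) : Prop :=
  ∃ c : Fin n → BB k n, (∃ a b : ℕ, ∀ i, BiHom k n (c i) a b) ∧
    (∑ i, xB k n i * c i) = p ∧ (∑ i, yB k n i * c i) = q

/-- `h 0, h 1, …, h (d-1)` is a downgraded sequence (of length `d`, indexed from `0`). -/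
def IsDowngradedSeq (d : ℕ) (h : ℕ → BB k n) : Prop :=
  ∀ i : ℕ, i + 1 < d → IsDowngrade k n (h i) (h (i + 1))


/-! ### Auxiliary: Koszul syzygies of the variables -/

namespace DownAux

variable {K : Type*} [Field K] {N : ℕ}

/-- evaluation killing variable M -/
def piM (M : Fin N) : MvPolynomial (Fin N) K →ₐ[K] MvPolynomial (Fin N) K :=
  aeval (Function.update X M 0)

lemma piM_X_ne (M : Fin N) {j : Fin N} (hj : j ≠ M) : piM M (X j : MvPolynomial (Fin N) K) = X j := by
  simp [piM, Function.update_of_ne hj]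

lemma piM_X_self (M : Fin N) : piM M (X M : MvPolynomial (Fin N) K) = 0 := by
  simp [piM]

lemma piM_decomp (M : Fin N) (p : MvPolynomial (Fin N) K) :
    ∃ r, p = piM M p + X M * r := by
  induction p using MvPolynomial.induction_on with
  | C a => exact ⟨0, by simp [piM]⟩
  | add p q hp hq =>
    obtain ⟨r, hr⟩ := hp; obtain ⟨s, hs⟩ := hq
    exact ⟨r + s, by rw [map_add]; ring_nf; nth_rewrite 1 [hr]; nth_rewrite 1 [hs]; ring⟩
  | mul_X p j hp =>
    obtain ⟨r, hr⟩ := hp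
    by_cases hj : j = M
    · subst hj
      exact ⟨p, by rw [map_mul, piM_X_self, mul_zero, zero_add, mul_comm]⟩
    · exact ⟨r * X j, by rw [map_mul, piM_X_ne M hj]; nth_rewrite 1 [hr]; ring⟩

lemma piM_supported (M : Fin N) (s : Set (Fin N)) {p : MvPolynomial (Fin N) K}
    (hp : p ∈ supported K s) : piM M p ∈ supported K (s \ {M}) := by
  have h1 : piM M p ∈ Subalgebra.map (piM M) (supported K s) := ⟨p, hp, rfl⟩
  rw [supported, AlgHom.map_adjoin] at h1
  have h2 : Algebra.adjoin K (⇑(piM M) '' (X '' s)) ≤ supported K (s \ {M}) := by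
    apply Algebra.adjoin_le
    intro q hq
    obtain ⟨x, ⟨l, hl, rfl⟩, rfl⟩ := hq
    show piM M (X l) ∈ (supported K (s \ {M}) : Subalgebra K _)
    by_cases hlM : l = M
    · subst hlM; rw [piM_X_self]; exact zero_mem _
    · rw [piM_X_ne M hlM]
      have hmem : l ∈ s \ {M} := ⟨hl, hlM⟩
      exact X_mem_supported.mpr hmem
  exact h2 h1

lemma koszul_aux (m : ℕ) (g : Fin N → MvPolynomial (Fin N) K)
    (hsupp : ∀ j, g j ∈ supported K {l : Fin N | (l : ℕ) < m})
    (hzero : ∀ j : Fin N, m ≤ (j : ℕ) → g j = 0)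
    (hsum : ∑ j, g j * X j = 0) :
    ∃ e : Fin N → Fin N → MvPolynomial (Fin N) K,
      (∀ j, e j j = 0) ∧ (∀ j l, e l j = -e j l) ∧ ∀ j, g j = ∑ l, e j l * X l := by
  induction m generalizing g with
  | zero =>
    refine ⟨0, by simp, by simp, fun j => ?_⟩
    simp [hzero j (Nat.zero_le _)]
  | succ m ih =>
    by_cases hmN : m < N
    · set M : Fin N := ⟨m, hmN⟩ with hM
      choose r hr using fun j => piM_decomp M (g j)
      set a : Fin N → MvPolynomial (Fin N) K := fun j => if j = M then 0 else piM M (g j) with ha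
      have hsupp' : ∀ j, a j ∈ supported K {l : Fin N | (l : ℕ) < m} := by
        intro j
        by_cases hj : j = M
        · simp only [ha, if_pos hj]; exact zero_mem _
        · simp only [ha, if_neg hj]
          refine SetLike.le_def.mp (supported_mono ?_) (piM_supported M _ (hsupp j))
          rintro l ⟨hl1, hl2⟩
          have : (l : ℕ) ≠ m := fun h => hl2 (Fin.ext h)
          simp only [Set.mem_setOf_eq] at hl1 ⊢
          omega
      have hzero' : ∀ j : Fin N, m ≤ (j : ℕ) → a j = 0 := by
        intro j hj
        by_cases hjM : j = M
        · simp [ha, hjM]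
        · have : (j : ℕ) ≠ m := fun h => hjM (Fin.ext h)
          simp [ha, hjM, hzero j (by omega)]
      have hterm : ∀ j, a j * X j = piM M (g j) * piM M (X j) := by
        intro j
        by_cases hjM : j = M
        · subst hjM; simp [ha, piM_X_self]
        · simp [ha, hjM, piM_X_ne M hjM]
      have hsum' : ∑ j, a j * X j = 0 := by
        calc ∑ j, a j * X j = ∑ j, piM M (g j) * piM M (X j) := Finset.sum_congr rfl fun j _ => hterm j
        _ = piM M (∑ j, g j * X j) := by rw [map_sum]; exact Finset.sum_congr rfl fun j _ => (map_mul _ _ _).symm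
        _ = 0 := by rw [hsum, map_zero]
      obtain ⟨e', he'0, he'skew, he'eq⟩ := ih a hsupp' hzero' hsum'
      -- compute piM M (g M)
      have hgM : piM M (g M) = -∑ j, r j * X j := by
        have h1 : ∑ j, piM M (g j) * X j = piM M (g M) * X M := by
          have : ∀ j ∈ Finset.univ, piM M (g j) * X j
              = a j * X j + (if j = M then piM M (g M) * X M else 0) := by
            intro j _
            by_cases hjM : j = M
            · subst hjM; simp [ha]
            · simp [ha, hjM]
          rw [Finset.sum_congr rfl this, Finset.sum_add_distrib, hsum', zero_add,
            Finset.sum_ite_eq' Finset.univ M (fun _ => piM M (g M) * X M)]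
          simp
        have h2 : (0 : MvPolynomial (Fin N) K) = X M * (piM M (g M) + ∑ j, r j * X j) := by
          calc (0 : MvPolynomial (Fin N) K) = ∑ j, g j * X j := hsum.symm
          _ = ∑ j, (piM M (g j) + X M * r j) * X j := Finset.sum_congr rfl fun j _ => by rw [← hr j]
          _ = ∑ j, piM M (g j) * X j + X M * ∑ j, r j * X j := by
              rw [Finset.mul_sum, ← Finset.sum_add_distrib]
              exact Finset.sum_congr rfl fun j _ => by ring
          _ = X M * (piM M (g M) + ∑ j, r j * X j) := by rw [h1]; ring
        have h3 : piM M (g M) + ∑ j, r j * X j = 0 := by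
          rcases mul_eq_zero.mp h2.symm with h | h
          · exact absurd h (X_ne_zero M)
          · exact h
        exact eq_neg_of_add_eq_zero_left h3
      set eps : Fin N → Fin N → MvPolynomial (Fin N) K :=
        fun j l => (if l = M ∧ j ≠ M then r j else 0) - (if j = M ∧ l ≠ M then r l else 0)
        with heps
      have heps0 : ∀ j, eps j j = 0 := by
        intro j; by_cases hj : j = M <;> simp [heps, hj]
      have hepsskew : ∀ j l, eps l j = -eps j l := by
        intro j l
        by_cases h1 : j = M <;> by_cases h2 : l = M <;> simp [heps, h1, h2]
      refine ⟨fun j l => e' j l + eps j l, fun j => ?_, fun j l => ?_, fun j => ?_⟩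
      · show e' j j + eps j j = 0
        rw [he'0, heps0, add_zero]
      · show e' l j + eps l j = -(e' j l + eps j l)
        rw [he'skew j l, hepsskew j l]; ring
      · show g j = ∑ l, (e' j l + eps j l) * X l
        by_cases hjM : j = M
        · subst hjM
          have haM : (0 : MvPolynomial (Fin N) K) = ∑ l, e' M l * X l := by
            have := he'eq M; simpa [ha] using this
          have hstep : ∀ l ∈ Finset.univ, (e' M l + eps M l) * X l
              = e' M l * X l + ((if l = M then r l * X l else 0) - r l * X l) := by
            intro l _
            by_cases hlM : l = M <;> simp [heps, hlM] <;> ring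
          rw [Finset.sum_congr rfl hstep, Finset.sum_add_distrib, ← haM, zero_add,
            Finset.sum_sub_distrib, Finset.sum_ite_eq' Finset.univ M (fun l => r l * X l)]
          rw [if_pos (Finset.mem_univ M), hr M, hgM]
          ring
        · have hstep : ∀ l ∈ Finset.univ, (e' j l + eps j l) * X l
              = e' j l * X l + (if l = M then r j * X l else 0) := by
            intro l _
            by_cases hlM : l = M <;> simp [heps, hlM, hjM] <;> ring
          rw [Finset.sum_congr rfl hstep, Finset.sum_add_distrib,
            Finset.sum_ite_eq' Finset.univ M (fun l => r j * X l),
            if_pos (Finset.mem_univ M), ← he'eq j]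
          simp only [ha, if_neg hjM]
          linear_combination hr j
    · refine ih g (fun j => ?_) (fun j hj => ?_) hsum
      · refine SetLike.le_def.mp (supported_mono ?_) (hsupp j)
        intro l _
        exact lt_of_lt_of_le l.isLt (by omega)
      · exact absurd hj (by have := j.isLt; omega)


lemma koszul {K : Type*} [Field K] {N : ℕ} (g : Fin N → MvPolynomial (Fin N) K)
    (hsum : ∑ j, g j * X j = 0) :
    ∃ e : Fin N → Fin N → MvPolynomial (Fin N) K,
      (∀ j, e j j = 0) ∧ (∀ j l, e l j = -e j l) ∧ ∀ j, g j = ∑ l, e j l * X l := by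
  apply koszul_aux N g ?_ ?_ hsum
  · intro j
    have huniv : {l : Fin N | (l : ℕ) < N} = Set.univ := by
      ext l; simp [l.isLt]
    rw [huniv, supported_univ]
    exact Algebra.mem_top
  · intro j hj
    exact absurd hj (by have := j.isLt; omega)

end DownAux

section DownMain

open DownAux

/-- The parametrizing ring `R[t][u]`. -/
abbrev WW := Polynomial (Polynomial (MvPolynomial (Fin n) k))

/-- The parametrization `B → R[t][u]`, `x i ↦ x i`, `y i ↦ t * x i`, `y (n+1) ↦ u`. -/
def phiW : BB k n →+* WW k n :=
  eval₂Hom (Polynomial.C.comp Polynomial.C)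
    (fun j => if h : (j : ℕ) < n then Polynomial.C (Polynomial.X * Polynomial.C (X ⟨j, h⟩))
      else Polynomial.X)

lemma phiW_C (r : RR k n) : phiW k n (C r) = Polynomial.C (Polynomial.C r) := by
  simp [phiW]

lemma phiW_x (i : Fin n) : phiW k n (xB k n i) = Polynomial.C (Polynomial.C (X i)) := by
  rw [xB, phiW_C]

lemma phiW_y (i : Fin n) :
    phiW k n (yB k n i) = Polynomial.C (Polynomial.X * Polynomial.C (X i)) := by
  have h : ((i.castSucc : Fin (n + 1)) : ℕ) < n := by
    simpa using i.isLt
  have h2 : (⟨((i.castSucc : Fin (n + 1)) : ℕ), h⟩ : Fin n) = i := by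
    apply Fin.ext; simp
  rw [yB, phiW, eval₂Hom_X', dif_pos h, h2]

lemma phiW_I2 : ∀ p ∈ I2ψ k n, phiW k n p = 0 := by
  have hspan : I2ψ k n ≤ RingHom.ker (phiW k n) := by
    rw [I2ψ, Ideal.span_le]
    rintro q ⟨⟨p1, p2⟩, rfl⟩
    simp only [SetLike.mem_coe, RingHom.mem_ker]
    rw [map_sub, map_mul, map_mul, phiW_x, phiW_y, phiW_x, phiW_y,
      ← map_mul, ← map_mul, ← map_sub]
    rw [show (Polynomial.C (X p1) * (Polynomial.X * Polynomial.C (X p2))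
      - Polynomial.C (X p2) * (Polynomial.X * Polynomial.C (X p1)) :
        Polynomial (MvPolynomial (Fin n) k)) = 0 by ring, map_zero]
  exact fun p hp => hspan hp

/-- A degree-one homogeneous multivariate polynomial is a linear form. -/
lemma homog_one_decomp {σ : Type*} [Fintype σ] [DecidableEq σ] {R : Type*} [CommRing R]
    (p : MvPolynomial σ R) (hp : p.IsHomogeneous 1) :
    p = ∑ j, C (coeff (Finsupp.single j 1) p) * X j := by
  have hm1 : ∀ m : σ →₀ ℕ, (Finsupp.weight 1) m = 1 → ∃ j, m = Finsupp.single j 1 := by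
    intro m hw
    have hm : (m.sum fun _ e => e) = 1 := by
      simpa [Finsupp.weight_apply, smul_eq_mul] using hw
    have hne : m.support.Nonempty := by
      rcases Finset.eq_empty_or_nonempty m.support with he | hne
      · exfalso
        rw [Finsupp.sum, he, Finset.sum_empty] at hm
        exact one_ne_zero hm.symm
      · exact hne
    obtain ⟨j, hj⟩ := hne
    refine ⟨j, ?_⟩
    have hj1 : 1 ≤ m j := Nat.one_le_iff_ne_zero.mpr (Finsupp.mem_support_iff.mp hj)
    have hsum : m j + ∑ l ∈ m.support.erase j, m l = 1 := by
      rw [Finset.add_sum_erase _ _ hj]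
      exact hm
    have hmj : m j = 1 := by omega
    have hrest : ∑ l ∈ m.support.erase j, m l = 0 := by omega
    ext l
    by_cases hlj : l = j
    · subst hlj; rw [hmj, Finsupp.single_eq_same]
    · rw [Finsupp.single_eq_of_ne' (Ne.symm hlj)]
      by_cases hls : l ∈ m.support
      · exact (Finset.sum_eq_zero_iff.mp hrest) l (Finset.mem_erase.mpr ⟨hlj, hls⟩)
      · exact Finsupp.notMem_support_iff.mp hls
  ext m
  rw [coeff_sum]
  by_cases hc : coeff m p = 0
  · rw [hc]
    refine (Finset.sum_eq_zero fun j _ => ?_).symm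
    rw [coeff_C_mul, coeff_X']
    split
    · next heq => rw [heq, hc, mul_one]
    · rw [mul_zero]
  · obtain ⟨j0, hj0⟩ := hm1 m (hp hc)
    have hstep : ∀ j ∈ Finset.univ, coeff m (C (coeff (Finsupp.single j 1) p) * X j)
        = if j = j0 then coeff m p else 0 := by
      intro j _
      rw [coeff_C_mul, coeff_X']
      by_cases hjj : j = j0
      · subst hjj
        rw [if_pos hj0.symm, if_pos rfl, hj0, mul_one]
      · rw [if_neg, if_neg hjj, mul_zero]
        rw [hj0]
        intro hcon
        exact hjj (Finsupp.single_left_injective one_ne_zero hcon)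
    rw [Finset.sum_congr rfl hstep, Finset.sum_ite_eq' Finset.univ j0 (fun _ => coeff m p),
      if_pos (Finset.mem_univ j0)]

lemma ysum_mem (g : Fin n → RR k n) (hs : ∑ i, g i * X i = 0) :
    (∑ i, C (g i) * yB k n i) ∈ I2ψ k n := by
  obtain ⟨e, he0, heskew, heeq⟩ := koszul g hs
  have hrw : ∑ i, C (g i) * yB k n i
      = ∑ p : Fin n × Fin n, C (e p.1 p.2) * (xB k n p.2 * yB k n p.1) := by
    rw [Fintype.sum_prod_type]
    refine Finset.sum_congr rfl fun j _ => ?_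
    rw [heeq j, map_sum, Finset.sum_mul]
    refine Finset.sum_congr rfl fun l _ => ?_
    rw [map_mul, xB]
    ring
  rw [hrw, ← Ideal.Quotient.eq_zero_iff_mem, map_sum]
  refine Finset.sum_involution (fun p _ => Prod.swap p) ?_ ?_ (fun p hp => Finset.mem_univ _)
    (fun p hp => Prod.swap_swap p)
  · intro p _
    rw [← map_add, Ideal.Quotient.eq_zero_iff_mem]
    have : C (e p.1 p.2) * (xB k n p.2 * yB k n p.1)
        + C (e p.swap.1 p.swap.2) * (xB k n p.swap.2 * yB k n p.swap.1)
        = C (e p.1 p.2) * (xB k n p.2 * yB k n p.1 - xB k n p.1 * yB k n p.2) := by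
      rw [show p.swap.1 = p.2 from rfl, show p.swap.2 = p.1 from rfl, heskew p.1 p.2, map_neg]
      ring
    rw [this]
    exact Ideal.mul_mem_left _ _ (Ideal.subset_span ⟨(p.2, p.1), rfl⟩)
  · intro p _ hne hswap
    apply hne
    have hp12 : p.2 = p.1 := congrArg Prod.fst hswap
    rw [hp12, he0, map_zero, zero_mul, map_zero]

/-- Base case: a bihomogeneous element of `y`-degree one killed by the parametrization lies
in `I₂(ψ)`. -/
lemma base_case (p : BB k n) (hhom : p.IsHomogeneous 1) (hker : phiW k n p = 0) :
    p ∈ I2ψ k n := by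
  set g : Fin (n + 1) → RR k n := fun j => coeff (Finsupp.single j 1) p with hg
  have hdec : p = ∑ j, C (g j) * X j := homog_one_decomp p hhom
  rw [hdec, map_sum] at hker
  rw [Fin.sum_univ_castSucc] at hker
  set s : RR k n := ∑ i : Fin n, g i.castSucc * X i with hsdef
  have hchunk : ∑ i : Fin n, phiW k n (C (g i.castSucc) * X i.castSucc)
      = Polynomial.C (Polynomial.X * Polynomial.C s) := by
    rw [hsdef, map_sum, Finset.mul_sum, map_sum]
    refine Finset.sum_congr rfl fun i _ => ?_
    rw [map_mul, phiW_C, show (X i.castSucc : BB k n) = yB k n i from rfl, phiW_y, ← map_mul]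
    refine congrArg Polynomial.C ?_
    rw [map_mul]
    ring
  have hlast : phiW k n (C (g (Fin.last n)) * X (Fin.last n))
      = Polynomial.C (Polynomial.C (g (Fin.last n))) * Polynomial.X := by
    rw [map_mul, phiW_C, phiW, eval₂Hom_X', dif_neg (by simp)]
  rw [hchunk, hlast] at hker
  -- extract coefficients
  have hglast : g (Fin.last n) = 0 := by
    have := congrArg (fun q => Polynomial.coeff q 1) hker
    simpa using this
  have hs0 : s = 0 := by
    rw [hglast, map_zero, map_zero, zero_mul, add_zero] at hker
    have h1 : (Polynomial.X * Polynomial.C s : Polynomial (MvPolynomial (Fin n) k)) = 0 :=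
      Polynomial.C_eq_zero.mp hker
    rcases mul_eq_zero.mp h1 with hcase | hcase
    · exact absurd hcase Polynomial.X_ne_zero
    · exact Polynomial.C_eq_zero.mp hcase
  have hsum0 : ∑ i : Fin n, g i.castSucc * X i = 0 := by rw [← hsdef]; exact hs0
  have hmem := ysum_mem k n (fun i => g i.castSucc) hsum0
  rw [hdec, Fin.sum_univ_castSucc, hglast, map_zero, zero_mul, add_zero]
  exact hmem

/-- The bidegree-`(a,b)` property is preserved by sums. -/
lemma bihom_sum {ι : Type*} {t : Finset ι} {f : ι → BB k n} {a b : ℕ}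
    (hf : ∀ i ∈ t, BiHom k n (f i) a b) : BiHom k n (∑ i ∈ t, f i) a b := by
  constructor
  · exact IsHomogeneous.sum _ _ _ fun i hi => (hf i hi).1
  · intro m
    rw [coeff_sum]
    exact IsHomogeneous.sum _ _ _ fun i hi => (hf i hi).2 m

lemma bihom_xmul (i : Fin n) {c : BB k n} {a b : ℕ} (hc : BiHom k n c a b) :
    BiHom k n (xB k n i * c) (a + 1) b := by
  constructor
  · have := (isHomogeneous_C (Fin (n + 1)) (X i : RR k n)).mul hc.1
    rw [zero_add] at this
    exact this
  · intro m
    rw [xB, coeff_C_mul]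
    have := (isHomogeneous_X k i).mul (hc.2 m)
    rwa [add_comm 1 a] at this

lemma bihom_ymul (i : Fin n) {c : BB k n} {a b : ℕ} (hc : BiHom k n c a b) :
    BiHom k n (yB k n i * c) a (b + 1) := by
  constructor
  · have := (isHomogeneous_X (RR k n) (i.castSucc : Fin (n+1))).mul hc.1
    rw [add_comm 1 b] at this
    exact this
  · intro m
    rw [yB, mul_comm, coeff_mul_X']
    split
    · exact hc.2 _
    · exact isHomogeneous_zero _ _ _

lemma bihom_unique {p : BB k n} (hp : p ≠ 0) {a b a' b' : ℕ}
    (h1 : BiHom k n p a b) (h2 : BiHom k n p a' b') : a = a' ∧ b = b' := by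
  constructor
  · obtain ⟨m, hm⟩ := ne_zero_iff.mp hp
    exact IsHomogeneous.inj_right (h1.2 m) (h2.2 m) hm
  · exact IsHomogeneous.inj_right h1.1 h2.1 hp

end DownMain

/-- if `h 0 = h` is bihomogeneous of bidegree `(d-1, 1)` with `h ∉ I₂(ψ)` and
`h 0, …, h (d-1)` is a downgraded sequence, then each `h i` is nonzero and bihomogeneous of
bidegree `(d-1-i, i+1)` (so `h_{i+1}` in the paper's indexing has bidegree `(d-(i+1), i+1)`). -/
theorem downgraded_sequence_nonzero_bidegree
    [IsAlgClosed k] (d : ℕ) (hn : 2 ≤ n) (hd : 2 ≤ d)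
    (h : ℕ → BB k n) (hbi : BiHom k n (h 0) (d - 1) 1) (hnot : h 0 ∉ I2ψ k n)
    (hseq : IsDowngradedSeq k n d h) :
    ∀ i : ℕ, i < d → h i ≠ 0 ∧ BiHom k n (h i) (d - 1 - i) (i + 1) := by
  have i0 : Fin n := ⟨0, by omega⟩
  have step_mem : ∀ p q : BB k n, IsDowngrade k n p q →
      xB k n ⟨0, by omega⟩ * q - yB k n ⟨0, by omega⟩ * p ∈ I2ψ k n := by
    rintro p q ⟨c, -, hx, hy⟩
    rw [← hx, ← hy, Finset.mul_sum, Finset.mul_sum, ← Finset.sum_sub_distrib]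
    apply Ideal.sum_mem
    intro j _
    have hterm : xB k n ⟨0, by omega⟩ * (yB k n j * c j)
        - yB k n ⟨0, by omega⟩ * (xB k n j * c j)
        = (xB k n ⟨0, by omega⟩ * yB k n j - xB k n j * yB k n ⟨0, by omega⟩) * c j := by
      ring
    rw [hterm]
    exact Ideal.mul_mem_right _ _ (Ideal.subset_span ⟨(⟨0, by omega⟩, j), rfl⟩)
  have main : ∀ i : ℕ, i < d → phiW k n (h i) ≠ 0 ∧ BiHom k n (h i) (d - 1 - i) (i + 1) := by
    intro i
    induction i with
    | zero =>
      intro _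
      refine ⟨fun hz => hnot (base_case k n (h 0) hbi.1 hz), by simpa using hbi⟩
    | succ i IH =>
      intro hid
      obtain ⟨hphi, hbih⟩ := IH (by omega)
      obtain ⟨c, ⟨a, b, hc⟩, hx, hy⟩ := hseq i hid
      have hne : h i ≠ 0 := fun hz => hphi (by rw [hz, map_zero])
      have hbx : BiHom k n (h i) (a + 1) b := by
        rw [← hx]
        exact bihom_sum k n fun j _ => bihom_xmul k n j (hc j)
      obtain ⟨haa, hbb⟩ := bihom_unique k n hne hbx hbih
      have hby : BiHom k n (h (i + 1)) a (b + 1) := by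
        rw [← hy]
        exact bihom_sum k n fun j _ => bihom_ymul k n j (hc j)
      have hmem := step_mem (h i) (h (i + 1)) ⟨c, ⟨a, b, hc⟩, hx, hy⟩
      have heq : phiW k n (xB k n ⟨0, by omega⟩) * phiW k n (h (i + 1))
          = phiW k n (yB k n ⟨0, by omega⟩) * phiW k n (h i) := by
        have h0 := phiW_I2 k n _ hmem
        rw [map_sub, map_mul, map_mul] at h0
        exact sub_eq_zero.mp h0
      constructor
      · intro hz
        rw [hz, mul_zero] at heq
        have hy0 : phiW k n (yB k n ⟨0, by omega⟩) ≠ 0 := by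
          rw [phiW_y]
          exact Polynomial.C_ne_zero.mpr
            (mul_ne_zero Polynomial.X_ne_zero (Polynomial.C_ne_zero.mpr (X_ne_zero _)))
        exact (mul_ne_zero hy0 hphi) heq.symm
      · have ha2 : a = d - 1 - (i + 1) := by omega
        have hb2 : b + 1 = i + 1 + 1 := by omega
        rw [ha2, hb2] at hby
        exact hby
  intro i hid
  obtain ⟨hphi, hb⟩ := main i hid
  exact ⟨fun hz => hphi (by rw [hz, map_zero]), hb⟩

end
end

section
/- With the downgrading construction above, the ideals J_i = I_2(ψ) + (h_1,...,h_i) for 1 ≤ i ≤ d are independent of the choice of the columns ∂h_{i-1} at each step: if ∂h_{i-1} and ∂h_{i-1}' both satisfy [x_1 ... x_n]·(column) = h_{i-1}, then the two resulting elements h_i = [y_1 ... y_n]·∂h_{i-1} and h_i' = [y_1 ... y_n]·∂h_{i-1}' differ by an element of I_2(ψ). -/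
open MvPolynomial

set_option maxHeartbeats 1000000
set_option synthInstance.maxHeartbeats 1000000

noncomputable section

variable (k : Type*) [Field k] (n : ℕ)

lemma aux_X_regular (M : Fin n) (s : Set (Fin n)) (hM : M ∉ s) (g : MvPolynomial (Fin n) k)
    (h : X M * g ∈ Ideal.span (X '' s : Set (MvPolynomial (Fin n) k))) :
    g ∈ Ideal.span (X '' s : Set (MvPolynomial (Fin n) k)) := by
  rw [mem_ideal_span_X_image] at h ⊢
  intro mon hmon
  obtain ⟨i, his, hi⟩ := h (Finsupp.single M 1 + mon) (by
    rw [mem_support_iff, coeff_X_mul]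
    exact mem_support_iff.mp hmon)
  refine ⟨i, his, ?_⟩
  have hiM : i ≠ M := fun e => hM (e ▸ his)
  simpa [Finsupp.single_apply, hiM.symm] using hi

lemma aux_xB_regular (M : Fin n) (s : Set (Fin n)) (hM : M ∉ s) (f : BB k n)
    (h : xB k n M * f ∈ Ideal.span (xB k n '' s)) :
    f ∈ Ideal.span (xB k n '' s) := by
  have hspan : Ideal.span (xB k n '' s) =
      Ideal.map (C : MvPolynomial (Fin n) k →+* BB k n) (Ideal.span (X '' s)) := by
    rw [Ideal.map_span, Set.image_image]
    rfl
  rw [hspan, mem_map_C_iff] at h ⊢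
  intro mon
  have h2 := h mon
  rw [show xB k n M * f = C (X M) * f from rfl, coeff_C_mul] at h2
  exact aux_X_regular k n M s hM _ h2

lemma aux_key (m : ℕ) (d : Fin n → BB k n) (hd0 : ∀ i : Fin n, m ≤ i.val → d i = 0)
    (hsum : (∑ i, xB k n i * d i) = 0) : (∑ i, yB k n i * d i) ∈ I2ψ k n := by
  induction m generalizing d with
  | zero =>
    have hz : ∀ i, d i = 0 := fun i => hd0 i (Nat.zero_le _)
    simp only [hz, mul_zero, Finset.sum_const_zero]
    exact zero_mem _
  | succ m ih =>
    by_cases hm : m < n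
    · set M : Fin n := ⟨m, hm⟩ with hMdef
      set s : Set (Fin n) := {i | i.val < m} with hsdef
      have hMs : M ∉ s := by simp [hsdef, hMdef]
      -- split the x-sum
      have hsplit : (∑ i ∈ Finset.univ.filter (fun i : Fin n => i.val < m), xB k n i * d i)
          + xB k n M * d M = 0 := by
        rw [← hsum, ← Finset.sum_filter_add_sum_filter_not Finset.univ
          (fun i : Fin n => i.val < m)]
        congr 1
        rw [Finset.sum_eq_single M]
        · intro i hi hiM
          simp only [Finset.mem_filter, Finset.mem_univ, true_and, not_lt] at hi
          have : i.val ≠ m := fun h => hiM (Fin.ext h)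
          rw [hd0 i (by omega), mul_zero]
        · intro h
          exact absurd (by simp [hMdef] : M ∈ Finset.univ.filter (fun i : Fin n => ¬ i.val < m)) h
      have hmem : xB k n M * d M ∈ Ideal.span (xB k n '' s) := by
        have : xB k n M * d M
            = -∑ i ∈ Finset.univ.filter (fun i : Fin n => i.val < m), xB k n i * d i := by
          linear_combination hsplit
        rw [this]
        refine neg_mem (Ideal.sum_mem _ fun i hi => ?_)
        simp only [Finset.mem_filter, Finset.mem_univ, true_and] at hi
        exact Ideal.mul_mem_right _ _ (Ideal.subset_span ⟨i, hi, rfl⟩)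
      have hdM : d M ∈ Ideal.span (xB k n '' s) := aux_xB_regular k n M s hMs _ hmem
      -- representation of d M
      have hle : Ideal.span (xB k n '' s) ≤
          Ideal.span (Set.range (fun i : Fin n => if i.val < m then xB k n i else 0)) := by
        rw [Ideal.span_le]
        rintro _ ⟨i, hi, rfl⟩
        exact Ideal.subset_span ⟨i, if_pos hi⟩
      obtain ⟨e, he⟩ := (Submodule.mem_span_range_iff_exists_fun _).mp (hle hdM)
      set e' : Fin n → BB k n := fun i => if i.val < m then e i else 0 with he'def
      have he' : ∑ i, e' i * xB k n i = d M := by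
        rw [← he]
        refine Finset.sum_congr rfl fun i _ => ?_
        by_cases hi : i.val < m <;> simp [he'def, hi, smul_eq_mul, mul_comm]
      have he'M : e' M = 0 := by simp [he'def, hMdef]
      set d' : Fin n → BB k n := fun i => if i = M then 0 else d i + xB k n M * e' i with hd'def
      have hd'0 : ∀ i : Fin n, m ≤ i.val → d' i = 0 := by
        intro i hi
        by_cases hiM : i = M
        · simp [hd'def, hiM]
        · have hne : i.val ≠ m := fun h => hiM (Fin.ext h)
          have h1 : d i = 0 := hd0 i (by omega)
          have h2 : e' i = 0 := if_neg (by omega)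
          simp [hd'def, hiM, h1, h2]
      have hterm : ∀ i : Fin n, xB k n i * d' i
          = (xB k n i * d i + xB k n M * (e' i * xB k n i))
            - (if i = M then xB k n M * d M else 0) := by
        intro i
        by_cases hiM : i = M
        · subst hiM
          rw [show d' M = 0 from if_pos rfl, if_pos rfl, he'M]
          ring
        · rw [show d' i = d i + xB k n M * e' i from if_neg hiM, if_neg hiM]
          ring
      have hsum' : (∑ i, xB k n i * d' i) = 0 := by
        rw [Finset.sum_congr rfl fun i _ => hterm i, Finset.sum_sub_distrib,
          Finset.sum_add_distrib, hsum, ← Finset.mul_sum, he', Finset.sum_ite_eq'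
          Finset.univ M (fun _ => xB k n M * d M)]
        simp only [Finset.mem_univ]
        rw [if_pos trivial]
        ring
      have hIH := ih d' hd'0 hsum'
      have hyterm : ∀ i : Fin n, yB k n i * d i
          = yB k n i * d' i + (if i = M then yB k n M * d M else 0)
            - yB k n i * (xB k n M * e' i) := by
        intro i
        by_cases hiM : i = M
        · subst hiM
          rw [show d' M = 0 from if_pos rfl, if_pos rfl, he'M]
          ring
        · rw [show d' i = d i + xB k n M * e' i from if_neg hiM, if_neg hiM]
          ring
      have hdiff : (∑ i, yB k n i * d i) = (∑ i, yB k n i * d' i)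
          + ∑ i, e' i * (xB k n i * yB k n M - xB k n M * yB k n i) := by
        rw [Finset.sum_congr rfl fun i _ => hyterm i, Finset.sum_sub_distrib,
          Finset.sum_add_distrib, Finset.sum_ite_eq' Finset.univ M
          (fun _ => yB k n M * d M)]
        simp only [Finset.mem_univ]
        rw [if_pos trivial, ← he', Finset.mul_sum, add_sub_assoc, ← Finset.sum_sub_distrib]
        congr 1
        exact Finset.sum_congr rfl fun i _ => by ring
      rw [hdiff]
      refine add_mem hIH (Ideal.sum_mem _ fun i _ => ?_)
      exact Ideal.mul_mem_left _ _ (Ideal.subset_span ⟨(i, M), rfl⟩)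
    · exact ih d (fun i hi => absurd i.isLt (by omega)) hsum

/-- the downgrading step is well defined modulo `I₂(ψ)`: if two columns `c`, `c'`
satisfy `[x₁ … xₙ]·c = [x₁ … xₙ]·c'`, then `[y₁ … yₙ]·c` and `[y₁ … yₙ]·c'` differ by an
element of `I₂(ψ)`. Consequently the ideals `Jᵢ = I₂(ψ) + (h₁,…,hᵢ)` are independent of the
choices made. -/
theorem downgrade_well_defined
    [IsAlgClosed k] (hn : 2 ≤ n)
    (c c' : Fin n → BB k n)
    (hcc' : (∑ i, xB k n i * c i) = ∑ i, xB k n i * c' i) :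
    (∑ i, yB k n i * c i) - (∑ i, yB k n i * c' i) ∈ I2ψ k n := by
  have h1 : (∑ i, xB k n i * (c i - c' i)) = 0 := by
    simp only [mul_sub, Finset.sum_sub_distrib, hcc', sub_self]
  have h2 := aux_key k n n (fun i => c i - c' i) (fun i hi => absurd i.isLt (by omega)) h1
  simpa only [mul_sub, Finset.sum_sub_distrib] using h2

end
end

section
/- Let h_1,...,h_d be a downgraded sequence as above, and set J_i = I_2(ψ) + (h_1,...,h_i) and L = J_1 = I_2(ψ) + (h_1). Then for 1 ≤ i ≤ d, J_i ⊆ L : m^{i−1}, where m = (x_1,...,x_n). In particular, modulo I_2(ψ), one has the equality of ideals h_i·m + I_2(ψ) = h_{i−1}·(y_1,...,y_n) + I_2(ψ) for i ≥ 2. -/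
open MvPolynomial

set_option maxHeartbeats 1000000
set_option synthInstance.maxHeartbeats 1000000

noncomputable section

variable (k : Type*) [Field k] (n : ℕ)

lemma downgrade_rel {p q : BB k n} (hpq : IsDowngrade k n p q) (j : Fin n) :
    xB k n j * q - yB k n j * p ∈ I2ψ k n := by
  obtain ⟨c, -, hx, hy⟩ := hpq
  rw [← hx, ← hy, Finset.mul_sum, Finset.mul_sum, ← Finset.sum_sub_distrib]
  refine Ideal.sum_mem _ fun i _ => ?_
  have : xB k n j * (yB k n i * c i) - yB k n j * (xB k n i * c i)
      = (xB k n j * yB k n i - xB k n i * yB k n j) * c i := by ring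
  rw [this]
  exact Ideal.mul_mem_right _ _ (Ideal.subset_span ⟨(j, i), rfl⟩)

lemma mul_mx_eq {p q : BB k n} (hpq : IsDowngrade k n p q) :
    Ideal.span {q} * mxB k n ⊔ I2ψ k n =
      Ideal.span {p} * Ideal.span (Set.range (yB k n)) ⊔ I2ψ k n := by
  apply le_antisymm
  · refine sup_le ?_ le_sup_right
    refine Ideal.mul_le.mpr fun r hr s hs => ?_
    rw [Ideal.mem_span_singleton] at hr
    obtain ⟨a, rfl⟩ := hr
    induction hs using Submodule.span_induction with
    | mem x hx =>
      obtain ⟨j, rfl⟩ := hx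
      have key := downgrade_rel k n hpq j
      have : q * a * xB k n j = a * (xB k n j * q - yB k n j * p) + a * (yB k n j * p) := by ring
      rw [this]
      refine Ideal.add_mem _ (Ideal.mem_sup_right (Ideal.mul_mem_left _ _ key)) ?_
      refine Ideal.mem_sup_left ?_
      rw [show a * (yB k n j * p) = p * (a * yB k n j) from by ring]
      exact Ideal.mul_mem_mul (Ideal.mem_span_singleton_self p)
        (Ideal.mul_mem_left _ _ (Ideal.subset_span ⟨j, rfl⟩))
    | zero => simp
    | add x y _ _ hx hy => rw [mul_add]; exact Ideal.add_mem _ hx hy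
    | smul b x _ hx =>
      rw [smul_eq_mul, show q * a * (b * x) = b * (q * a * x) from by ring]
      exact Ideal.mul_mem_left _ _ hx
  · refine sup_le ?_ le_sup_right
    refine Ideal.mul_le.mpr fun r hr s hs => ?_
    rw [Ideal.mem_span_singleton] at hr
    obtain ⟨a, rfl⟩ := hr
    induction hs using Submodule.span_induction with
    | mem x hx =>
      obtain ⟨j, rfl⟩ := hx
      have key := downgrade_rel k n hpq j
      have : p * a * yB k n j = (-a) * (xB k n j * q - yB k n j * p) + a * (xB k n j * q) := by
        ring
      rw [this]
      refine Ideal.add_mem _ (Ideal.mem_sup_right (Ideal.mul_mem_left _ _ key)) ?_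
      refine Ideal.mem_sup_left ?_
      rw [show a * (xB k n j * q) = q * (a * xB k n j) from by ring]
      exact Ideal.mul_mem_mul (Ideal.mem_span_singleton_self q)
        (Ideal.mul_mem_left _ _ (Ideal.subset_span ⟨j, rfl⟩))
    | zero => simp
    | add x y _ _ hx hy => rw [mul_add]; exact Ideal.add_mem _ hx hy
    | smul b x _ hx =>
      rw [smul_eq_mul, show p * a * (b * x) = b * (p * a * x) from by ring]
      exact Ideal.mul_mem_left _ _ hx

lemma step_lemma (d : ℕ) (h : ℕ → BB k n) (hseq : IsDowngradedSeq k n d h) :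
    ∀ j : ℕ, j < d → Ideal.span {h j} * mxB k n ^ j ≤ I2ψ k n ⊔ Ideal.span {h 0} := by
  intro j
  induction j with
  | zero => intro _; rw [pow_zero, mul_one]; exact le_sup_right
  | succ j ih =>
    intro hjd
    have heq := mul_mx_eq k n (hseq j hjd)
    have h1 : Ideal.span {h (j + 1)} * mxB k n ^ (j + 1)
        = (Ideal.span {h (j + 1)} * mxB k n) * mxB k n ^ j := by
      rw [pow_succ]; ring
    rw [h1]
    have h2 : Ideal.span {h (j + 1)} * mxB k n
        ≤ Ideal.span {h j} * Ideal.span (Set.range (yB k n)) ⊔ I2ψ k n :=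
      heq ▸ le_sup_left
    calc (Ideal.span {h (j + 1)} * mxB k n) * mxB k n ^ j
        ≤ (Ideal.span {h j} * Ideal.span (Set.range (yB k n)) ⊔ I2ψ k n) * mxB k n ^ j :=
          Ideal.mul_mono_left h2
      _ = (Ideal.span {h j} * mxB k n ^ j) * Ideal.span (Set.range (yB k n))
            ⊔ I2ψ k n * mxB k n ^ j := by rw [Ideal.sup_mul]; ring_nf
      _ ≤ I2ψ k n ⊔ Ideal.span {h 0} := by
          refine sup_le ?_ (le_trans Ideal.mul_le_left le_sup_left)
          exact le_trans Ideal.mul_le_left (ih (by omega))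


/-- for a downgraded sequence `h₁,…,h_d` (here `h 0, …, h (d-1)`), with
`Jᵢ = I₂(ψ) + (h₁,…,hᵢ)` and `L = J₁`, one has `Jᵢ ⊆ L : m^{i-1}` for `1 ≤ i ≤ d`; moreover,
modulo `I₂(ψ)`, `hᵢ·m + I₂(ψ) = h_{i-1}·(y₁,…,yₙ) + I₂(ψ)` for `i ≥ 2`. -/
theorem Ji_contained_in_colon
    [IsAlgClosed k] (d : ℕ) (hn : 2 ≤ n) (hd : 2 ≤ d)
    (h : ℕ → BB k n) (hbi : BiHom k n (h 0) (d - 1) 1) (hnot : h 0 ∉ I2ψ k n)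
    (hseq : IsDowngradedSeq k n d h) :
    (∀ i : ℕ, 1 ≤ i → i ≤ d →
      I2ψ k n ⊔ Ideal.span (h '' Set.Iio i) ≤
        (I2ψ k n ⊔ Ideal.span {h 0}).colon (((mxB k n) ^ (i - 1) : Ideal (BB k n)) : Set (BB k n))) ∧
    ∀ i : ℕ, 2 ≤ i → i ≤ d →
      Ideal.span {h (i - 1)} * mxB k n ⊔ I2ψ k n =
        Ideal.span {h (i - 2)} * Ideal.span (Set.range (yB k n)) ⊔ I2ψ k n := by
  constructor
  · intro i h1 hid
    have claim : (I2ψ k n ⊔ Ideal.span (h '' Set.Iio i)) * mxB k n ^ (i - 1)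
        ≤ I2ψ k n ⊔ Ideal.span {h 0} := by
      rw [Ideal.sup_mul]
      refine sup_le (le_trans Ideal.mul_le_left le_sup_left) ?_
      refine Ideal.mul_le.mpr fun r hr s hs => ?_
      induction hr using Submodule.span_induction with
      | mem x hx =>
        obtain ⟨j, hji, rfl⟩ := hx
        simp only [Set.mem_Iio] at hji
        have hpow : mxB k n ^ (i - 1) = mxB k n ^ j * mxB k n ^ (i - 1 - j) := by
          rw [← pow_add]; congr 1; omega
        have hm : h j * s ∈ (Ideal.span {h j} * mxB k n ^ j) * mxB k n ^ (i - 1 - j) := by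
          rw [mul_assoc, ← hpow]
          exact Ideal.mul_mem_mul (Ideal.mem_span_singleton_self _) hs
        exact le_trans (Ideal.mul_mono_left (step_lemma k n d h hseq j (by omega)))
          Ideal.mul_le_left hm
      | zero => simp
      | add x y _ _ hx hy => rw [add_mul]; exact Ideal.add_mem _ hx hy
      | smul b x _ hx =>
        rw [smul_eq_mul, mul_assoc]
        exact Ideal.mul_mem_left _ _ hx
    intro f hf
    refine Submodule.mem_colon.mpr fun p hp => ?_
    rw [smul_eq_mul]
    exact claim (Ideal.mul_mem_mul hf hp)
  · intro i h2 hid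
    obtain ⟨m, rfl⟩ : ∃ m, i = m + 2 := ⟨i - 2, by omega⟩
    exact mul_mx_eq k n (hseq m (by omega))

end
end

section
/- Let A = R[y_1,...,y_{n+1}]/I_2(ψ) and let \bar{K} be the image of I_2(ψ)+(x_n,y_n). Let h_1,...,h_d be a downgraded sequence starting from h. Then in the domain A, \bar{h_1}·\bar{y_n}^{i−1} = \bar{x_n}^{i−1}·\bar{h_i} for all 1 ≤ i ≤ d, and consequently \bar{h}·\bar{K}^{d−1} = \bar{x_n}^{d−1}·(\bar{h_1},...,\bar{h_d}) as ideals of A. -/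
open MvPolynomial

set_option maxHeartbeats 1000000
set_option synthInstance.maxHeartbeats 1000000

noncomputable section

variable (k : Type*) [Field k] (n : ℕ)

/-- in the domain `A = B/I₂(ψ)`, a downgraded sequence satisfies
`h̄₁·ȳₙ^{i-1} = x̄ₙ^{i-1}·h̄ᵢ` for `1 ≤ i ≤ d`, and consequently
`h̄·K̄^{d-1} = x̄ₙ^{d-1}·(h̄₁,…,h̄_d)` as ideals of `A`. -/
theorem downgraded_sequence_in_A
    [IsAlgClosed k] (d : ℕ) (hn : 2 ≤ n) (hd : 2 ≤ d)
    (h : ℕ → BB k n) (hbi : BiHom k n (h 0) (d - 1) 1) (hnot : h 0 ∉ I2ψ k n)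
    (hseq : IsDowngradedSeq k n d h) :
    (∀ i : ℕ, 1 ≤ i → i ≤ d →
      πA k n (h 0) * (πA k n (yB k n (lastx n (by omega)))) ^ (i - 1) =
        (πA k n (xB k n (lastx n (by omega)))) ^ (i - 1) * πA k n (h (i - 1))) ∧
    Ideal.span {πA k n (h 0)} *
        (Ideal.map (πA k n)
          (Ideal.span {xB k n (lastx n (by omega)), yB k n (lastx n (by omega))})) ^ (d - 1) =
      Ideal.span {(πA k n (xB k n (lastx n (by omega)))) ^ (d - 1)} *
        Ideal.span ((fun j => πA k n (h j)) '' Set.Iio d) := by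
  have hn0 : 0 < n := by omega
  letI : CommRing (BB k n) := inferInstance
  have l : Fin n := lastx n hn0
  refine ?_
  let L : Fin n := lastx n hn0
  let X0 : AA k n := πA k n (xB k n L)
  let Y0 : AA k n := πA k n (yB k n L)
  let H : ℕ → AA k n := fun j => πA k n (h j)
  have key : ∀ j, j + 1 < d → H j * Y0 = X0 * H (j + 1) := by
    intro j hj
    obtain ⟨c, -, hxc, hyc⟩ := hseq j hj
    show πA k n (h j) * πA k n (yB k n L) = πA k n (xB k n L) * πA k n (h (j + 1))
    simp only [πA, ← map_mul]
    rw [Ideal.Quotient.mk_eq_mk_iff_sub_mem]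
    rw [← hxc, ← hyc, Finset.sum_mul, Finset.mul_sum, ← Finset.sum_sub_distrib]
    refine Ideal.sum_mem _ fun i _ => ?_
    have heq : xB k n i * c i * yB k n L - xB k n L * (yB k n i * c i)
        = (xB k n i * yB k n L - xB k n L * yB k n i) * c i := by ring
    rw [heq]
    exact Ideal.mul_mem_right _ _ (Ideal.subset_span ⟨(i, L), rfl⟩)
  have part1 : ∀ j, j < d → H 0 * Y0 ^ j = X0 ^ j * H j := by
    intro j
    induction j with
    | zero => intro _; simp
    | succ j ih =>
      intro hj
      calc H 0 * Y0 ^ (j + 1) = H 0 * Y0 ^ j * Y0 := by ring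
        _ = X0 ^ j * H j * Y0 := by rw [ih (by omega)]
        _ = X0 ^ j * (H j * Y0) := by ring
        _ = X0 ^ j * (X0 * H (j + 1)) := by rw [key j hj]
        _ = X0 ^ (j + 1) * H (j + 1) := by ring
  have hmap : Ideal.map (πA k n) (Ideal.span {xB k n L, yB k n L})
      = Ideal.span {X0, Y0} := by
    rw [Ideal.map_span]
    congr 1
    simp [Set.image_insert_eq]
    rfl
  have main : ∀ m, m + 1 ≤ d →
      Ideal.span {H 0} * (Ideal.span {X0, Y0}) ^ m
        = Ideal.span ((fun j => X0 ^ m * H j) '' Set.Iio (m + 1)) := by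
    intro m
    induction m with
    | zero =>
      intro _
      rw [pow_zero (Ideal.span {X0, Y0}), mul_one]
      congr 1
      ext a
      simp [Nat.lt_one_iff, eq_comm]
    | succ m ih =>
      intro hm
      rw [pow_succ (Ideal.span {X0, Y0}) m, ← mul_assoc, ih (by omega), Ideal.span_mul_span']
      apply le_antisymm <;> rw [Ideal.span_le] <;> intro a ha
      · obtain ⟨u, hu, v, hv, rfl⟩ := Set.mem_mul.mp ha
        obtain ⟨j, hj, rfl⟩ := hu
        simp only [Set.mem_Iio] at hj
        simp only [Set.mem_insert_iff, Set.mem_singleton_iff] at hv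
        rcases hv with rfl | rfl
        · exact Ideal.subset_span ⟨j, Set.mem_Iio.mpr (by omega), by ring⟩
        · refine Ideal.subset_span ⟨j + 1, Set.mem_Iio.mpr (by omega), ?_⟩
          have hk := key j (by omega)
          simp only
          linear_combination (-(X0 ^ m : AA k n)) * hk
      · obtain ⟨j, hj, rfl⟩ := ha
        simp only [Set.mem_Iio] at hj
        rcases Nat.lt_succ_iff_lt_or_eq.mp hj with hj' | rfl
        · refine Ideal.subset_span (Set.mem_mul.mpr
            ⟨X0 ^ m * H j, ⟨j, Set.mem_Iio.mpr hj', rfl⟩, X0, Set.mem_insert _ _, by ring⟩)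
        · refine Ideal.subset_span (Set.mem_mul.mpr
            ⟨X0 ^ m * H m, ⟨m, Set.mem_Iio.mpr (by omega), rfl⟩, Y0,
              Set.mem_insert_of_mem _ rfl, ?_⟩)
          have hk := key m (by omega)
          simp only
          linear_combination (X0 ^ m : AA k n) * hk
  have hd1 : d - 1 + 1 = d := by omega
  have part2 : Ideal.span {H 0} *
        (Ideal.map (πA k n) (Ideal.span {xB k n L, yB k n L})) ^ (d - 1)
      = Ideal.span {X0 ^ (d - 1)} * Ideal.span (H '' Set.Iio d) := by
    rw [hmap, main (d - 1) (by omega), hd1, Ideal.span_mul_span', Set.singleton_mul,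
      Set.image_image]
  exact ⟨fun i h1 h2 => part1 (i - 1) (by omega), part2⟩

end
end
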